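/- Let A = [[1, 2, -2 + 4i/√3],[0, 1, -2],[0, 0, 1]] and B = [[1, 2i/√3, -2/3],[√3·i, -1, 0],[-3/2, 0, 0]] in M₃(ℂ), and let H be the Hermitian matrix with rows (0,0,1), (0,1,0), (1,0,0) with associated form ⟨z,w⟩ = w* H z. Set p₁ = (-2/3, 1 - (√3/3)i, 1), p₂ = (-2/3 + (2√3/3)i, -1 - (√3/3)i, 1), p₃ = (-2/3 - (2√3/3)i, 1 - (√3/3)i, 1), p₄ = (-2/3, -1 - (√3/3)i, 1) in ℂ³. Then each of the matrices M₁ = B⁻¹A, M₂ = BA⁻¹, M₃ = BA, M₄ = AB is unipotent, i.e. satisfies tr(Mⱼ) = 3, (Mⱼ − 1)³ = 0 and Mⱼ ≠ 1; moreover each pⱼ is a null vector, ⟨pⱼ,pⱼ⟩ = 0, and Mⱼ·pⱼ = pⱼ for j = 1,2,3,4. -/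

import Mathlib

open Matrix

/-- The Hermitian form matrix of signature (2,1). -/
noncomputable def Hmat : Matrix (Fin 3) (Fin 3) ℂ := !![0,0,1; 0,1,0; 1,0,0]

/-- The Hermitian form ⟨z,w⟩ = w* H z. -/
noncomputable def herm (z w : Fin 3 → ℂ) : ℂ := star w ⬝ᵥ (Hmat *ᵥ z)

/-- The normalized parabolic generator A of the even subgroup of Δ(3,∞,∞;∞). -/
noncomputable def Amat : Matrix (Fin 3) (Fin 3) ℂ :=
  !![1, 2, -2 + 4 * Complex.I / (Real.sqrt 3 : ℂ);
     0, 1, -2;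
     0, 0, 1]

/-- The normalized generator B of the even subgroup of Δ(3,∞,∞;∞). -/
noncomputable def Bmat : Matrix (Fin 3) (Fin 3) ℂ :=
  !![1, 2 * Complex.I / (Real.sqrt 3 : ℂ), -2/3;
     (Real.sqrt 3 : ℂ) * Complex.I, -1, 0;
     -3/2, 0, 0]

/-- Lift of the parabolic fixed point of B⁻¹A. -/
noncomputable def p₁ : Fin 3 → ℂ :=
  ![-2/3, 1 - ((Real.sqrt 3 : ℂ) / 3) * Complex.I, 1]

/-- Lift of the parabolic fixed point of BA⁻¹. -/
noncomputable def p₂ : Fin 3 → ℂ :=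
  ![-2/3 + (2 * (Real.sqrt 3 : ℂ) / 3) * Complex.I,
    -1 - ((Real.sqrt 3 : ℂ) / 3) * Complex.I, 1]

/-- Lift of the parabolic fixed point of BA. -/
noncomputable def p₃ : Fin 3 → ℂ :=
  ![-2/3 - (2 * (Real.sqrt 3 : ℂ) / 3) * Complex.I,
    1 - ((Real.sqrt 3 : ℂ) / 3) * Complex.I, 1]

/-- Lift of the parabolic fixed point of AB. -/
noncomputable def p₄ : Fin 3 → ℂ :=
  ![-2/3, -1 - ((Real.sqrt 3 : ℂ) / 3) * Complex.I, 1]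

/-- A matrix is unipotent when its trace is 3, (M-1)³ = 0 and M ≠ 1. -/
def IsUnipotentNontrivial (M : Matrix (Fin 3) (Fin 3) ℂ) : Prop :=
  Matrix.trace M = 3 ∧ (M - 1) ^ 3 = 0 ∧ M ≠ 1

noncomputable def AinvMat : Matrix (Fin 3) (Fin 3) ℂ :=
  !![1, -2, -2 - (4/3) * ((Real.sqrt 3 : ℂ) * Complex.I);
     0, 1, 2;
     0, 0, 1]

noncomputable def BinvMat : Matrix (Fin 3) (Fin 3) ℂ :=
  !![0, 0, -2/3;
     0, -1, -(2/3) * ((Real.sqrt 3 : ℂ) * Complex.I);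
     -3/2, -((Real.sqrt 3 : ℂ) * Complex.I), 1]

noncomputable def M1 : Matrix (Fin 3) (Fin 3) ℂ :=
  !![0, 0, -2/3;
     0, -1, 2 - (2/3) * ((Real.sqrt 3 : ℂ) * Complex.I);
     -3/2, -3 - ((Real.sqrt 3 : ℂ) * Complex.I), 4]

noncomputable def M2 : Matrix (Fin 3) (Fin 3) ℂ :=
  !![1, -2 + (2/3) * ((Real.sqrt 3 : ℂ) * Complex.I), -8/3;
     (Real.sqrt 3 : ℂ) * Complex.I, -1 - 2 * ((Real.sqrt 3 : ℂ) * Complex.I),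
       2 - 2 * ((Real.sqrt 3 : ℂ) * Complex.I);
     -3/2, 3, 3 + 2 * ((Real.sqrt 3 : ℂ) * Complex.I)]

noncomputable def M3 : Matrix (Fin 3) (Fin 3) ℂ :=
  !![1, 2 + (2/3) * ((Real.sqrt 3 : ℂ) * Complex.I), -8/3;
     (Real.sqrt 3 : ℂ) * Complex.I, -1 + 2 * ((Real.sqrt 3 : ℂ) * Complex.I),
       -2 - 2 * ((Real.sqrt 3 : ℂ) * Complex.I);
     -3/2, -3, 3 - 2 * ((Real.sqrt 3 : ℂ) * Complex.I)]

noncomputable def M4 : Matrix (Fin 3) (Fin 3) ℂ :=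
  !![4, -2 + (2/3) * ((Real.sqrt 3 : ℂ) * Complex.I), -2/3;
     3 + ((Real.sqrt 3 : ℂ) * Complex.I), -1, 0;
     -3/2, 0, 0]

lemma hs2 : (Real.sqrt 3 : ℂ)^2 = 3 := by
  rw [← Complex.ofReal_pow, Real.sq_sqrt (by norm_num)]; norm_num

lemma hs0 : (Real.sqrt 3 : ℂ) ≠ 0 :=
  Complex.ofReal_ne_zero.mpr (Real.sqrt_ne_zero'.mpr (by norm_num))

lemma hs3 : (Real.sqrt 3 : ℂ)^3 = 3 * (Real.sqrt 3 : ℂ) := by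
  rw [pow_succ, hs2]; try ring

lemma hI3 : Complex.I ^ 3 = -Complex.I := by
  rw [pow_succ, Complex.I_sq]; try ring

lemma hI4 : Complex.I ^ 4 = 1 := by
  rw [pow_succ, hI3]; simp [Complex.I_mul_I]

lemma hAinv : Amat⁻¹ = AinvMat := by
  apply Matrix.inv_eq_right_inv
  ext i j
  fin_cases i <;> fin_cases j <;>
    simp [Amat, AinvMat, Matrix.mul_apply, Fin.sum_univ_three, Matrix.one_apply] <;>
    (try field_simp) <;> (try ring_nf) <;>
    (try simp [hs2, hs3, Complex.I_sq, hI3, hI4, Matrix.vecHead, Matrix.vecTail]) <;> (try ring_nf)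

lemma hBinv : Bmat⁻¹ = BinvMat := by
  apply Matrix.inv_eq_right_inv
  ext i j
  fin_cases i <;> fin_cases j <;>
    simp [Bmat, BinvMat, Matrix.mul_apply, Fin.sum_univ_three, Matrix.one_apply] <;>
    (try field_simp) <;> (try ring_nf) <;>
    (try simp [hs2, hs3, Complex.I_sq, hI3, hI4, Matrix.vecHead, Matrix.vecTail]) <;> (try ring_nf)

lemma hM1 : Bmat⁻¹ * Amat = M1 := by
  rw [hBinv]
  ext i j
  fin_cases i <;> fin_cases j <;>
    simp [Amat, BinvMat, M1, Matrix.mul_apply, Fin.sum_univ_three] <;>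
    (try field_simp) <;> (try ring_nf) <;>
    (try simp [hs2, hs3, Complex.I_sq, hI3, hI4, Matrix.vecHead, Matrix.vecTail]) <;> (try ring_nf)

lemma hM2 : Bmat * Amat⁻¹ = M2 := by
  rw [hAinv]
  ext i j
  fin_cases i <;> fin_cases j <;>
    simp [Bmat, AinvMat, M2, Matrix.mul_apply, Fin.sum_univ_three] <;>
    (try field_simp) <;> (try ring_nf) <;>
    (try simp [hs2, hs3, Complex.I_sq, hI3, hI4, Matrix.vecHead, Matrix.vecTail]) <;> (try ring_nf)

lemma hM3 : Bmat * Amat = M3 := by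
  ext i j
  fin_cases i <;> fin_cases j <;>
    simp [Bmat, Amat, M3, Matrix.mul_apply, Fin.sum_univ_three] <;>
    (try field_simp) <;> (try ring_nf) <;>
    (try simp [hs2, hs3, Complex.I_sq, hI3, hI4, Matrix.vecHead, Matrix.vecTail]) <;> (try ring_nf)

lemma hM4 : Amat * Bmat = M4 := by
  ext i j
  fin_cases i <;> fin_cases j <;>
    simp [Bmat, Amat, M4, Matrix.mul_apply, Fin.sum_univ_three] <;>
    (try field_simp) <;> (try ring_nf) <;>
    (try simp [hs2, hs3, Complex.I_sq, hI3, hI4, Matrix.vecHead, Matrix.vecTail]) <;> (try ring_nf)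

lemma unip (M : Matrix (Fin 3) (Fin 3) ℂ)
    (h1 : Matrix.trace M = 3) (h2 : (M - 1)^3 = 0) (h3 : M 2 0 ≠ 0) :
    IsUnipotentNontrivial M := by
  refine ⟨h1, h2, fun h => h3 ?_⟩
  rw [h]
  simp [Matrix.one_apply]

lemma cube (M : Matrix (Fin 3) (Fin 3) ℂ) : (M - 1)^3 = 0 ↔
    ((M - 1) * (M - 1)) * (M - 1) = 0 := by rw [pow_succ, pow_two]

lemma uM1 : IsUnipotentNontrivial M1 := by
  refine unip _ ?_ ?_ (by norm_num [M1, Matrix.vecHead, Matrix.vecTail, Matrix.cons_val_two])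
  · simp [Matrix.trace_fin_three, M1, Matrix.vecHead, Matrix.vecTail]; try ring
  · rw [cube]
    ext i j
    fin_cases i <;> fin_cases j <;>
      simp [M1, Matrix.mul_apply, Matrix.sub_apply, Matrix.one_apply,
        Fin.sum_univ_three] <;>
      ring_nf <;> (try simp [hs2, hs3, Complex.I_sq, hI3, hI4, Matrix.vecHead, Matrix.vecTail]) <;> (try ring_nf)

lemma uM2 : IsUnipotentNontrivial M2 := by
  refine unip _ ?_ ?_ (by norm_num [M2, Matrix.vecHead, Matrix.vecTail, Matrix.cons_val_two])
  · simp [Matrix.trace_fin_three, M2, Matrix.vecHead, Matrix.vecTail]; try ring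
  · rw [cube]
    ext i j
    fin_cases i <;> fin_cases j <;>
      simp [M2, Matrix.mul_apply, Matrix.sub_apply, Matrix.one_apply,
        Fin.sum_univ_three] <;>
      ring_nf <;> (try simp [hs2, hs3, Complex.I_sq, hI3, hI4, Matrix.vecHead, Matrix.vecTail]) <;> (try ring_nf)

lemma uM3 : IsUnipotentNontrivial M3 := by
  refine unip _ ?_ ?_ (by norm_num [M3, Matrix.vecHead, Matrix.vecTail, Matrix.cons_val_two])
  · simp [Matrix.trace_fin_three, M3, Matrix.vecHead, Matrix.vecTail]; try ring
  · rw [cube]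
    ext i j
    fin_cases i <;> fin_cases j <;>
      simp [M3, Matrix.mul_apply, Matrix.sub_apply, Matrix.one_apply,
        Fin.sum_univ_three] <;>
      ring_nf <;> (try simp [hs2, hs3, Complex.I_sq, hI3, hI4, Matrix.vecHead, Matrix.vecTail]) <;> (try ring_nf)

lemma uM4 : IsUnipotentNontrivial M4 := by
  refine unip _ ?_ ?_ (by norm_num [M4, Matrix.vecHead, Matrix.vecTail, Matrix.cons_val_two])
  · simp [Matrix.trace_fin_three, M4, Matrix.vecHead, Matrix.vecTail]; try ring
  · rw [cube]
    ext i j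
    fin_cases i <;> fin_cases j <;>
      simp [M4, Matrix.mul_apply, Matrix.sub_apply, Matrix.one_apply,
        Fin.sum_univ_three] <;>
      ring_nf <;> (try simp [hs2, hs3, Complex.I_sq, hI3, hI4, Matrix.vecHead, Matrix.vecTail]) <;> (try ring_nf)

lemma h1 : herm p₁ p₁ = 0 := by
  simp [herm, Hmat, p₁, Matrix.mulVec, dotProduct, Fin.sum_univ_three,
    Pi.star_apply, RCLike.star_def, map_sub, map_add, _root_.map_mul, map_div₀, map_neg,
    _root_.map_one, map_ofNat, Complex.conj_ofReal, Complex.conj_I]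
  ring_nf
  (try simp [hs2, hs3, Complex.I_sq, hI3, hI4, Matrix.vecHead, Matrix.vecTail])
  (try ring_nf)

lemma h2 : herm p₂ p₂ = 0 := by
  simp [herm, Hmat, p₂, Matrix.mulVec, dotProduct, Fin.sum_univ_three,
    Pi.star_apply, RCLike.star_def, map_sub, map_add, _root_.map_mul, map_div₀, map_neg,
    _root_.map_one, map_ofNat, Complex.conj_ofReal, Complex.conj_I]
  ring_nf
  (try simp [hs2, hs3, Complex.I_sq, hI3, hI4, Matrix.vecHead, Matrix.vecTail])
  (try ring_nf)

lemma h3 : herm p₃ p₃ = 0 := by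
  simp [herm, Hmat, p₃, Matrix.mulVec, dotProduct, Fin.sum_univ_three,
    Pi.star_apply, RCLike.star_def, map_sub, map_add, _root_.map_mul, map_div₀, map_neg,
    _root_.map_one, map_ofNat, Complex.conj_ofReal, Complex.conj_I]
  ring_nf
  (try simp [hs2, hs3, Complex.I_sq, hI3, hI4, Matrix.vecHead, Matrix.vecTail])
  (try ring_nf)

lemma h4 : herm p₄ p₄ = 0 := by
  simp [herm, Hmat, p₄, Matrix.mulVec, dotProduct, Fin.sum_univ_three,
    Pi.star_apply, RCLike.star_def, map_sub, map_add, _root_.map_mul, map_div₀, map_neg,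
    _root_.map_one, map_ofNat, Complex.conj_ofReal, Complex.conj_I]
  ring_nf
  (try simp [hs2, hs3, Complex.I_sq, hI3, hI4, Matrix.vecHead, Matrix.vecTail])
  (try ring_nf)

lemma f1 : M1 *ᵥ p₁ = p₁ := by
  funext i
  fin_cases i <;>
    simp [M1, p₁, Matrix.mulVec, dotProduct, Fin.sum_univ_three] <;>
    ring_nf <;> (try simp [hs2, hs3, Complex.I_sq, hI3, hI4, Matrix.vecHead, Matrix.vecTail]) <;> (try ring_nf)

lemma f2 : M2 *ᵥ p₂ = p₂ := by
  funext i
  fin_cases i <;>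
    simp [M2, p₂, Matrix.mulVec, dotProduct, Fin.sum_univ_three] <;>
    ring_nf <;> (try simp [hs2, hs3, Complex.I_sq, hI3, hI4, Matrix.vecHead, Matrix.vecTail]) <;> (try ring_nf)

lemma f3 : M3 *ᵥ p₃ = p₃ := by
  funext i
  fin_cases i <;>
    simp [M3, p₃, Matrix.mulVec, dotProduct, Fin.sum_univ_three] <;>
    ring_nf <;> (try simp [hs2, hs3, Complex.I_sq, hI3, hI4, Matrix.vecHead, Matrix.vecTail]) <;> (try ring_nf)

lemma f4 : M4 *ᵥ p₄ = p₄ := by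
  funext i
  fin_cases i <;>
    simp [M4, p₄, Matrix.mulVec, dotProduct, Fin.sum_univ_three] <;>
    ring_nf <;> (try simp [hs2, hs3, Complex.I_sq, hI3, hI4, Matrix.vecHead, Matrix.vecTail]) <;> (try ring_nf)

theorem parabolic_elements_and_fixed_points :
    (IsUnipotentNontrivial (Bmat⁻¹ * Amat) ∧ herm p₁ p₁ = 0 ∧
      (Bmat⁻¹ * Amat) *ᵥ p₁ = p₁) ∧
    (IsUnipotentNontrivial (Bmat * Amat⁻¹) ∧ herm p₂ p₂ = 0 ∧
      (Bmat * Amat⁻¹) *ᵥ p₂ = p₂) ∧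
    (IsUnipotentNontrivial (Bmat * Amat) ∧ herm p₃ p₃ = 0 ∧
      (Bmat * Amat) *ᵥ p₃ = p₃) ∧
    (IsUnipotentNontrivial (Amat * Bmat) ∧ herm p₄ p₄ = 0 ∧
      (Amat * Bmat) *ᵥ p₄ = p₄) := by
  refine ⟨⟨hM1 ▸ uM1, h1, hM1 ▸ f1⟩, ⟨hM2 ▸ uM2, h2, hM2 ▸ f2⟩,
    ⟨hM3 ▸ uM3, h3, hM3 ▸ f3⟩, ⟨hM4 ▸ uM4, h4, hM4 ▸ f4⟩⟩
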